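/- Let k be a field, let n ≥ 1 and a ≥ 1 be integers. The k-vector space of homogeneous polynomials F of degree a·n in k[x_1,…,x_{n+1}] such that, for every non-empty proper subset I ⊊ {1,…,n+1}, F lies in the ideal power (x_j : j ∉ I)^{a(n−|I|)} (i.e. F vanishes to order at least a(n−|I|) along the coordinate linear subspace spanned by the coordinate points indexed by I) has dimension binom(n+a, n). (This is the h^0-part of the theorem that the a-th multiple of the Cremona transform Cr_n(H) of the hyperplane class has the same cohomology as O_{ℙ^n}(a): h^0(a·Cr_n(H)) = h^0(ℙ^n, O(a)).) -/

import Mathlib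

open MvPolynomial Finset

noncomputable section

/-- The homogeneous vanishing ideal of the point of `ℙ^{N-1}` represented by the
vector `v`: the ideal generated by the linear forms vanishing at `v`. -/
def pointIdeal (k : Type) [Field k] (N : ℕ) (v : Fin N → k) :
    Ideal (MvPolynomial (Fin N) k) :=
  Ideal.span {P | P ∈ homogeneousSubmodule (Fin N) k 1 ∧ eval v P = 0}

/-- The homogeneous vanishing ideal `(x_j : j ≠ i)` of the `i`-th coordinate point. -/
def coordIdeal (k : Type) [Field k] (N : ℕ) (i : ℕ) :
    Ideal (MvPolynomial (Fin N) k) :=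
  Ideal.span {P | ∃ j : Fin N, (j : ℕ) ≠ i ∧ P = X j}

/-- The linear system `L_{n,d}(m_1,…,m_s; p_1,…,p_s)` of degree-`d` forms in `n+1`
variables with multiplicity at least `m i` at the point `p i`, for `i < s`. -/
def linSys (k : Type) [Field k] (n d s : ℕ) (m : ℕ → ℕ)
    (p : ℕ → (Fin (n + 1) → k)) : Submodule k (MvPolynomial (Fin (n + 1)) k) :=
  (homogeneousSubmodule (Fin (n + 1)) k d) ⊓
    ⨅ i ∈ Finset.range s,
      Submodule.restrictScalars k (pointIdeal k (n + 1) (p i) ^ (m i))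

/-- The generic dimension of `L_{n,d}(m_1,…,m_s)`: the minimum over all `s`-tuples of
points of `ℙ^n(k)` of the dimension of the corresponding linear system. -/
def gdim (k : Type) [Field k] (n d s : ℕ) (m : ℕ → ℕ) : ℕ :=
  sInf {N | ∃ p : ℕ → (Fin (n + 1) → k),
    (∀ i < s, p i ≠ 0) ∧ N = Module.finrank k ↥(linSys k n d s m p)}

/-- `k_I = max(Σ_{i∈I} m_i − (|I|−1)d, 0)`. -/
def kIdx (d : ℕ) (m : ℕ → ℕ) (I : Finset ℕ) : ℤ :=
  max ((∑ i ∈ I, (m i : ℤ)) - ((I.card : ℤ) - 1) * d) 0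

/-- `binom(a, n)`, understood to be `0` whenever `a < n` (in particular for negative `a`). -/
def binomZ (a : ℤ) (n : ℕ) : ℤ :=
  if a < (n : ℤ) then 0 else ((a.toNat).choose n : ℤ)

/-- The (affine) linear virtual dimension
`ℓ(n,d;m_1,…,m_s) = Σ_{I ⊆ {1,…,s}} (−1)^{|I|} binom(n + k_I − |I|, n)`. -/
def ldim (n d s : ℕ) (m : ℕ → ℕ) : ℤ :=
  ∑ I ∈ (Finset.range s).powerset,
    (-1) ^ I.card * binomZ ((n : ℤ) + kIdx d m I - (I.card : ℤ)) n

section Stmt5Aux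

variable {k : Type} [Field k] {N : ℕ}

lemma stmt5_monomial_mem_pow (T : Finset (Fin N)) (e : ℕ) :
    ∀ (m : Fin N →₀ ℕ) (c : k), e ≤ ∑ j ∈ T, m j →
      (monomial m c : MvPolynomial (Fin N) k) ∈
        (Ideal.span (X '' (↑T : Set (Fin N)))) ^ e := by
  induction e with
  | zero => intro m c _; simp [Ideal.one_eq_top]
  | succ e ih =>
    intro m c h
    obtain ⟨j, hjT, hj⟩ : ∃ j ∈ T, m j ≠ 0 := by
      by_contra hcon
      push_neg at hcon
      have : ∑ j ∈ T, m j = 0 := Finset.sum_eq_zero hcon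
      omega
    have hle : Finsupp.single j 1 ≤ m := by
      rw [Finsupp.single_le_iff]; omega
    have hm : Finsupp.single j 1 + (m - Finsupp.single j 1) = m := add_tsub_cancel_of_le hle
    have key : (monomial m c : MvPolynomial (Fin N) k)
        = X j * monomial (m - Finsupp.single j 1) c := by
      rw [X, monomial_mul, one_mul, hm]
    have hsub : ∀ j' ∈ T, (Finsupp.single j 1 : Fin N →₀ ℕ) j' ≤ m j' := fun j' _ => hle j'
    have hsum : ∑ j' ∈ T, ((m - Finsupp.single j 1 : Fin N →₀ ℕ)) j'
        = (∑ j' ∈ T, m j') - ∑ j' ∈ T, (Finsupp.single j 1 : Fin N →₀ ℕ) j' := by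
      simp only [Finsupp.tsub_apply]
      exact Finset.sum_tsub_distrib T hsub
    have hsingle : ∑ j' ∈ T, (Finsupp.single j 1 : Fin N →₀ ℕ) j' = 1 := by
      simp only [Finsupp.single_apply]
      rw [Finset.sum_ite_eq]
      simp [hjT]
    rw [key, pow_succ']
    refine Ideal.mul_mem_mul (Ideal.subset_span ⟨j, hjT, rfl⟩) (ih _ _ ?_)
    omega

lemma stmt5_mem_pow_iff (T : Finset (Fin N)) (e : ℕ) (p : MvPolynomial (Fin N) k) :
    p ∈ (Ideal.span (X '' (↑T : Set (Fin N))) : Ideal (MvPolynomial (Fin N) k)) ^ e ↔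
      ∀ m ∈ p.support, e ≤ ∑ j ∈ T, m j := by
  classical
  constructor
  · induction e generalizing p with
    | zero => intro _ m _; exact Nat.zero_le _
    | succ e ih =>
      intro hp
      rw [pow_succ'] at hp
      refine Submodule.mul_induction_on hp ?_ ?_
      · intro r hr q hq mm hmm
        have hr' := mem_ideal_span_X_image.mp hr
        have hq' := ih q hq
        obtain ⟨m1, hm1, m2, hm2, rfl⟩ := Finset.mem_add.mp (support_mul r q hmm)
        obtain ⟨i, hiT, hi⟩ := hr' m1 hm1
        have h2 := hq' m2 hm2
        have hsplit : ∑ j ∈ T, (m1 + m2) j = ∑ j ∈ T, m1 j + ∑ j ∈ T, m2 j := by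
          simp [Finsupp.add_apply, Finset.sum_add_distrib]
        have h0 : m1 i ≤ ∑ j ∈ T, m1 j :=
          Finset.single_le_sum (fun _ _ => Nat.zero_le _) hiT
        have h1 : 1 ≤ ∑ j ∈ T, m1 j := by omega
        omega
      · intro x y hx hy m hm
        rcases Finset.mem_union.mp (support_add hm) with h | h
        exacts [hx m h, hy m h]
  · intro h
    rw [p.as_sum]
    exact Submodule.sum_mem _ fun m hm => stmt5_monomial_mem_pow T e m _ (h m hm)

lemma stmt5_span_eq (I : Finset (Fin N)) :
    Ideal.span {P | ∃ j ∉ I, P = (X j : MvPolynomial (Fin N) k)}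
      = Ideal.span (X '' (↑(Iᶜ) : Set (Fin N))) := by
  congr 1
  ext Q
  simp only [Set.mem_setOf_eq, Set.mem_image, Finset.coe_compl, Set.mem_compl_iff,
    Finset.mem_coe]
  constructor
  · rintro ⟨j, hj, rfl⟩; exact ⟨j, hj, rfl⟩
  · rintro ⟨j, hj, rfl⟩; exact ⟨j, hj, rfl⟩

end Stmt5Aux

lemma stmt5_mem_V_iff {k : Type} [Field k] (n a : ℕ) (hn : 1 ≤ n) (p : MvPolynomial (Fin (n + 1)) k) :
    (p ∈ (homogeneousSubmodule (Fin (n + 1)) k (a * n)) ⊓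
      ⨅ (I : Finset (Fin (n + 1))) (_ : I.Nonempty) (_ : I ≠ Finset.univ),
        Submodule.restrictScalars k
          ((Ideal.span {P | ∃ j ∉ I, P = (X j : MvPolynomial (Fin (n + 1)) k)}) ^
            (a * (n - I.card)))) ↔
      ∀ m ∈ p.support, (∑ j, m j) = a * n ∧ ∀ j, m j ≤ a := by
  classical
  have hdeg : ∀ m : Fin (n + 1) →₀ ℕ, Finsupp.degree m = ∑ j, m j := fun m =>
    Finset.sum_subset (Finset.subset_univ _) fun j _ hj => Finsupp.notMem_support_iff.mp hj
  have hhom : p ∈ homogeneousSubmodule (Fin (n + 1)) k (a * n) ↔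
      ∀ m ∈ p.support, ∑ j, m j = a * n := by
    rw [mem_homogeneousSubmodule]
    constructor
    · intro hp m hm
      rw [← hdeg m, Finsupp.degree_eq_weight_one]
      exact hp (mem_support_iff.mp hm)
    · intro hp d hd
      change (Finsupp.weight fun _ => 1) d = a * n
      rw [← Finsupp.degree_eq_weight_one, hdeg d]
      exact hp d (mem_support_iff.mpr hd)
  simp only [Submodule.mem_inf, Submodule.mem_iInf, Submodule.restrictScalars_mem]
  rw [hhom]
  constructor
  · rintro ⟨h0, h1⟩ m hm
    refine ⟨h0 m hm, fun j => ?_⟩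
    have hIu : ({j} : Finset (Fin (n + 1))) ≠ Finset.univ := by
      intro hEq
      have hcu : (Finset.univ : Finset (Fin (n + 1))).card = n + 1 := by
        rw [Finset.card_univ, Fintype.card_fin]
      rw [← hEq, Finset.card_singleton] at hcu
      omega
    have hI := h1 {j} (Finset.singleton_nonempty j) hIu
    rw [stmt5_span_eq, stmt5_mem_pow_iff] at hI
    have hle := hI m hm
    have hcompl : ∑ j' ∈ ({j} : Finset (Fin (n + 1)))ᶜ, m j'
        + ∑ j' ∈ ({j} : Finset (Fin (n + 1))), m j' = ∑ j', m j' :=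
      Finset.sum_compl_add_sum _ _
    rw [Finset.sum_singleton] at hcompl
    rw [Finset.card_singleton] at hle
    have hkey : a * (n - 1) + a * 1 = a * n := by
      rw [← Nat.mul_add, Nat.sub_add_cancel hn]
    have hs := h0 m hm
    omega
  · intro h
    refine ⟨fun m hm => (h m hm).1, fun I _ hIuniv => ?_⟩
    rw [stmt5_span_eq, stmt5_mem_pow_iff]
    intro m hm
    obtain ⟨hsum, hbd⟩ := h m hm
    have hclt : I.card < n + 1 := by
      have := Finset.card_lt_card (Finset.ssubset_univ_iff.mpr hIuniv)
      simpa using this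
    have hc : I.card ≤ n := by omega
    have h1 : ∑ j ∈ Iᶜ, m j + ∑ j ∈ I, m j = a * n := by
      rw [Finset.sum_compl_add_sum]; exact hsum
    have h2 : ∑ j ∈ I, m j ≤ I.card * a := by
      have := Finset.sum_le_card_nsmul I (fun j => m j) a fun j _ => hbd j
      simpa [smul_eq_mul] using this
    have h3 : a * (n - I.card) + a * I.card = a * n := by
      rw [← Nat.mul_add, Nat.sub_add_cancel hc]
    have h4 : a * I.card = I.card * a := Nat.mul_comm _ _
    omega


/-- the space of degree-`a·n` forms lying in `(x_j : j ∉ I)^{a(n−|I|)}`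
for every nonempty proper subset `I` of the variables has dimension `binom(n+a,n)`. -/
theorem stmt5 (k : Type) [Field k] (n a : ℕ) (hn : 1 ≤ n) (ha : 1 ≤ a) :
    Module.finrank k ↥((homogeneousSubmodule (Fin (n + 1)) k (a * n)) ⊓
      ⨅ (I : Finset (Fin (n + 1))) (_ : I.Nonempty) (_ : I ≠ Finset.univ),
        Submodule.restrictScalars k
          ((Ideal.span {P | ∃ j ∉ I, P = (X j : MvPolynomial (Fin (n + 1)) k)}) ^
            (a * (n - I.card))))
      = (n + a).choose n := by
  classical
  have hconst : ∑ _j : Fin (n + 1), a = (n + 1) * a := by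
    rw [Finset.sum_const, Finset.card_univ, Fintype.card_fin, smul_eq_mul]
  have haux : (n + 1) * a = a * n + a := by ring
  have key1 : ∀ f : Fin (n + 1) → ℕ, (∀ j, f j ≤ a) →
      ∑ j, (a - f j) = (n + 1) * a - ∑ j, f j := by
    intro f hf
    rw [Finset.sum_tsub_distrib _ fun j _ => hf j, hconst]
  let E2 : {f : Fin (n + 1) → ℕ // (∑ j, f j) = a * n ∧ ∀ j, f j ≤ a}
      ≃ {f : Fin (n + 1) → ℕ // ∑ j, f j = a} :=
    { toFun := fun f => ⟨fun j => a - f.1 j, by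
        rw [key1 _ f.2.2, f.2.1]; omega⟩
      invFun := fun f => by
        refine ⟨fun j => a - f.1 j, ?_, fun j => Nat.sub_le _ _⟩
        have hb : ∀ j, f.1 j ≤ a := by
          intro j
          have h0 : f.1 j ≤ ∑ j', f.1 j' :=
            Finset.single_le_sum (fun _ _ => Nat.zero_le _) (Finset.mem_univ j)
          rw [f.2] at h0; exact h0
        rw [key1 _ hb, f.2]; omega
      left_inv := fun f => Subtype.ext (funext fun j => Nat.sub_sub_self (f.2.2 j))
      right_inv := fun f => Subtype.ext (funext fun j => by
        have h0 : f.1 j ≤ ∑ j', f.1 j' :=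
          Finset.single_le_sum (fun _ _ => Nat.zero_le _) (Finset.mem_univ j)
        rw [f.2] at h0
        exact Nat.sub_sub_self h0) }
  let E1 : {d : Fin (n + 1) →₀ ℕ // (∑ j, d j) = a * n ∧ ∀ j, d j ≤ a}
      ≃ {f : Fin (n + 1) → ℕ // (∑ j, f j) = a * n ∧ ∀ j, f j ≤ a} :=
    Finsupp.equivFunOnFinite.subtypeEquiv fun d => Iff.rfl
  let E : {d : Fin (n + 1) →₀ ℕ // (∑ j, d j) = a * n ∧ ∀ j, d j ≤ a}
      ≃ Sym (Fin (n + 1)) a :=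
    ((E1.trans E2).trans (Sym.equivNatSumOfFintype (Fin (n + 1)) a).symm)
  haveI : Fintype {d : Fin (n + 1) →₀ ℕ // (∑ j, d j) = a * n ∧ ∀ j, d j ≤ a} :=
    Fintype.ofEquiv _ E.symm
  have hcard : Fintype.card {d : Fin (n + 1) →₀ ℕ // (∑ j, d j) = a * n ∧ ∀ j, d j ≤ a}
      = (n + a).choose n := by
    rw [Fintype.card_congr E, Sym.card_sym_eq_choose, Fintype.card_fin]
    have h1 : n + 1 + a - 1 = n + a := by omega
    rw [h1, Nat.add_comm n a, Nat.choose_symm_add]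
  let b : {d : Fin (n + 1) →₀ ℕ // (∑ j, d j) = a * n ∧ ∀ j, d j ≤ a} →
      MvPolynomial (Fin (n + 1)) k := fun d => monomial d.1 1
  have hli : LinearIndependent k b := by
    have hb : b = ⇑(basisMonomials (Fin (n + 1)) k) ∘ Subtype.val := by
      funext d; simp [b, coe_basisMonomials]
    rw [hb]
    exact (basisMonomials (Fin (n + 1)) k).linearIndependent.comp _ Subtype.val_injective
  have hspan : ((homogeneousSubmodule (Fin (n + 1)) k (a * n)) ⊓
      ⨅ (I : Finset (Fin (n + 1))) (_ : I.Nonempty) (_ : I ≠ Finset.univ),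
        Submodule.restrictScalars k
          ((Ideal.span {P | ∃ j ∉ I, P = (X j : MvPolynomial (Fin (n + 1)) k)}) ^
            (a * (n - I.card))))
      = Submodule.span k (Set.range b) := by
    apply le_antisymm
    · intro p hp
      rw [stmt5_mem_V_iff n a hn p] at hp
      rw [p.as_sum]
      refine Submodule.sum_mem _ fun m hm => ?_
      have hmono : (monomial m (coeff m p) : MvPolynomial (Fin (n + 1)) k)
          = (coeff m p) • monomial m 1 := by
        rw [smul_monomial, smul_eq_mul, mul_one]
      rw [hmono]
      exact Submodule.smul_mem _ _ (Submodule.subset_span ⟨⟨m, hp m hm⟩, rfl⟩)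
    · rw [Submodule.span_le]
      rintro _ ⟨d, rfl⟩
      rw [SetLike.mem_coe, stmt5_mem_V_iff n a hn]
      intro m hm
      rw [support_monomial] at hm
      simp only [one_ne_zero, if_false, Finset.mem_singleton] at hm
      rw [hm]
      exact d.2
  rw [hspan, finrank_span_eq_card hli, hcard]
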